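/- In the polynomial ring K[x1, x2, y, z] over a field, the ideal of initial monomials of I = (x1, y) ∩ (x2, x1 + y·z) is (x1, x2·y), with respect to the monomial ordering induced by (|α|, α1, α2, α3, α4) lexicographically (variables ordered x1, x2, y, z). -/

import Mathlib

open MvPolynomial

noncomputable def psiMap (K : Type*) [Field K] :
    MvPolynomial (Fin 4) K →ₐ[K] MvPolynomial (Fin 4) K :=
  aeval ![-(X 2 * X 3), 0, X 2, X 3]

lemma degsum (α : Fin 4 →₀ ℕ) : (α.sum fun _ v => v) = α 0 + α 1 + α 2 + α 3 := by
  rw [Finsupp.sum_fintype _ _ (fun i => rfl), Fin.sum_univ_four]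

lemma psiMap_monomial {K : Type*} [Field K] (β : Fin 4 →₀ ℕ) (c : K) (hβ : β 1 = 0) :
    psiMap K (monomial β c) =
      monomial (Finsupp.single 2 (β 0 + β 2) + Finsupp.single 3 (β 0 + β 3)) ((-1) ^ β 0 * c) := by
  rw [psiMap, aeval_monomial, Finsupp.prod_fintype _ _ (fun i => pow_zero _), Fin.prod_univ_four]
  simp only [Matrix.cons_val_zero, Matrix.cons_val_one, Matrix.head_cons, Matrix.cons_val_two,
    Matrix.tail_cons, Matrix.cons_val_three]
  rw [hβ, pow_zero, mul_one]
  have h1 : (monomial (Finsupp.single 2 (β 0 + β 2) + Finsupp.single 3 (β 0 + β 3))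
      ((-1) ^ β 0 * c) : MvPolynomial (Fin 4) K) =
      C ((-1) ^ β 0 * c) * (X 2 ^ (β 0 + β 2) * X 3 ^ (β 0 + β 3)) := by
    rw [X_pow_eq_monomial, X_pow_eq_monomial, monomial_mul, C_mul_monomial]; congr 1; ring
  rw [h1, algebraMap_eq, map_mul, map_pow, map_neg, map_one]
  ring

lemma psiMap_monomial_zero {K : Type*} [Field K] (β : Fin 4 →₀ ℕ) (c : K) (hβ : β 1 ≠ 0) :
    psiMap K (monomial β c) = 0 := by
  rw [psiMap, aeval_monomial, Finsupp.prod_fintype _ _ (fun i => pow_zero _), Fin.prod_univ_four]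
  simp only [Matrix.cons_val_zero, Matrix.cons_val_one, Matrix.head_cons, Matrix.cons_val_two,
    Matrix.tail_cons, Matrix.cons_val_three]
  rw [zero_pow hβ]
  ring

theorem stmt_9 (K : Type*) [Field K] :
    let R := MvPolynomial (Fin 4) K
    let deg : (Fin 4 →₀ ℕ) → ℕ := fun α => α.sum fun _ v => v
    let keyle : (Fin 4 →₀ ℕ) → (Fin 4 →₀ ℕ) → Prop := fun α β =>
      (toLex (deg α, toLex ⇑α) : ℕ ×ₗ Lex (Fin 4 → ℕ)) ≤ toLex (deg β, toLex ⇑β)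
    let isExp : R → (Fin 4 →₀ ℕ) → Prop := fun f α =>
      coeff α f ≠ 0 ∧ ∀ β, coeff β f ≠ 0 → keyle α β
    let I : Ideal R := Ideal.span {X 0, X 2} ⊓ Ideal.span {X 1, X 0 + X 2 * X 3}
    let monI : Ideal R :=
      Ideal.span {g | ∃ f ∈ I, ∃ α, isExp f α ∧ g = monomial α (coeff α f)}
    monI = Ideal.span {X 0, X 1 * X 2} := by
  intro R deg keyle isExp I monI
  apply le_antisymm
  · -- monI ≤ (x1, x2 y)
    refine Ideal.span_le.mpr ?_
    rintro g ⟨f, hfI, α, ⟨hc, hmin⟩, rfl⟩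
    have hf1 : f ∈ Ideal.span {X 0, X 2} := hfI.1
    have hf2 : f ∈ Ideal.span {(X 1 : R), X 0 + X 2 * X 3} := hfI.2
    by_cases h0 : α 0 = 0
    · -- use f ∈ (x1, y) to get α 2 ≠ 0
      have hα2 : α 2 ≠ 0 := by
        intro h2
        apply hc
        obtain ⟨a, b, hab⟩ := Ideal.mem_span_pair.mp hf1
        rw [← hab, coeff_add, coeff_mul_X', coeff_mul_X', if_neg, if_neg, add_zero]
        · simp [Finsupp.mem_support_iff, h2]
        · simp [Finsupp.mem_support_iff, h0]
      by_cases h1 : α 1 = 0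
      · -- contradiction via ψ
        exfalso
        obtain ⟨a, b, hab⟩ := Ideal.mem_span_pair.mp hf2
        have hψ : psiMap K f = 0 := by
          rw [← hab, map_add, map_mul, map_mul, map_add, map_mul]
          simp only [psiMap, aeval_X, Matrix.cons_val_zero, Matrix.cons_val_one, Matrix.head_cons,
            Matrix.cons_val_two, Matrix.tail_cons, Matrix.cons_val_three]
          ring
        have hdeg : ∀ β, coeff β f ≠ 0 → deg α ≤ deg β := by
          intro β hβ
          have h := hmin β hβ
          rcases Prod.Lex.le_iff.mp h with h' | h'
          · exact le_of_lt h'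
          · exact le_of_eq h'.1
        have key : coeff α (psiMap K f) = coeff α f := by
          conv_lhs => rw [f.as_sum, map_sum, coeff_sum]
          rw [Finset.sum_eq_single α]
          · rw [psiMap_monomial _ _ h1, coeff_monomial, if_pos, h0, pow_zero, one_mul]
            ext i
            fin_cases i <;> simp [h0, h1, Finsupp.single_apply]
          · intro β hβs hβα
            have hβ : coeff β f ≠ 0 := mem_support_iff.mp hβs
            by_cases hβ1 : β 1 = 0
            · rw [psiMap_monomial _ _ hβ1, coeff_monomial]
              rw [if_neg]
              intro hγ
              have e2 := DFunLike.congr_fun hγ 2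
              have e3 := DFunLike.congr_fun hγ 3
              simp [Finsupp.single_apply] at e2 e3
              have hd := hdeg β hβ
              have hda : deg α = α 0 + α 1 + α 2 + α 3 := degsum α
              have hdb : deg β = β 0 + β 1 + β 2 + β 3 := degsum β
              have hβ0 : β 0 = 0 := by omega
              apply hβα
              ext i
              fin_cases i <;> simp [hβ0, hβ1] <;> omega
            · rw [psiMap_monomial_zero _ _ hβ1, coeff_zero]
          · intro h
            exact absurd (mem_support_iff.mpr hc) h
        rw [hψ, coeff_zero] at key
        exact hc key.symm
      · -- α 1 ≠ 0 and α 2 ≠ 0 : divisible by x2 y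
        have : (monomial α (coeff α f) : R) =
            (X 1 * X 2) * monomial (α - Finsupp.single 1 1 - Finsupp.single 2 1) (coeff α f) := by
          rw [show ((X 1 : R) * X 2) = monomial (Finsupp.single 1 1 + Finsupp.single 2 1) 1 by
            rw [X, X, monomial_mul, mul_one], monomial_mul, one_mul]
          have hs : Finsupp.single 1 1 + Finsupp.single 2 1 +
              (α - Finsupp.single 1 1 - Finsupp.single 2 1) = α := by
            ext i
            fin_cases i <;>
              simp [Finsupp.single_apply, Finsupp.tsub_apply] <;> omega
          rw [hs]
        rw [this]
        exact Ideal.mul_mem_right _ _ (Ideal.subset_span (by simp))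
    · -- α 0 ≠ 0 : divisible by x1
      have : (monomial α (coeff α f) : R) =
          X 0 * monomial (α - Finsupp.single 0 1) (coeff α f) := by
        rw [show (X 0 : R) = monomial (Finsupp.single 0 1) 1 from rfl, monomial_mul, one_mul]
        have hs : Finsupp.single 0 1 + (α - Finsupp.single 0 1) = α := by
          ext i
          fin_cases i <;>
            simp [Finsupp.single_apply, Finsupp.tsub_apply] <;> omega
        rw [hs]
      rw [this]
      exact Ideal.mul_mem_right _ _ (Ideal.subset_span (by simp))
  · -- (x1, x2 y) ≤ monI
    refine Ideal.span_le.mpr ?_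
    rintro g hg
    rcases hg with rfl | rfl
    · -- X 0, from f = X 0 + X 2 * X 3
      refine Ideal.subset_span ⟨X 0 + X 2 * X 3, ?_, Finsupp.single 0 1, ⟨?_, ?_⟩, ?_⟩
      · refine Ideal.mem_inf.mpr ⟨?_, ?_⟩
        · exact Ideal.mem_span_pair.mpr ⟨1, X 3, by ring⟩
        · exact Ideal.mem_span_pair.mpr ⟨0, 1, by ring⟩
      · rw [coeff_add, coeff_X', if_pos rfl]
        rw [show ((X 2 : R) * X 3) = monomial (Finsupp.single 2 1 + Finsupp.single 3 1) 1 by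
          rw [X, X, monomial_mul, mul_one], coeff_monomial, if_neg, add_zero]
        · exact one_ne_zero
        · intro h
          have := DFunLike.congr_fun h 0
          simp [Finsupp.single_apply] at this
      · intro β hβ
        have hco : coeff β ((X 0 : R) + X 2 * X 3) =
            (if Finsupp.single 0 1 = β then 1 else 0) +
            (if Finsupp.single 2 1 + Finsupp.single 3 1 = β then 1 else 0) := by
          rw [coeff_add, show (X 0 : R) = monomial (Finsupp.single 0 1) 1 from rfl,
            show ((X 2 : R) * X 3) = monomial (Finsupp.single 2 1 + Finsupp.single 3 1) 1 by
              rw [X, X, monomial_mul, mul_one], coeff_monomial, coeff_monomial]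
        rw [hco] at hβ
        by_cases hc1 : Finsupp.single 0 1 = β
        · subst hc1; exact le_refl _
        · have hc2 : Finsupp.single 2 1 + Finsupp.single 3 1 = β := by
            by_contra hc2
            rw [if_neg hc1, if_neg hc2] at hβ
            simp at hβ
          subst hc2
          refine Prod.Lex.le_iff.mpr (Or.inl ?_)
          show deg (Finsupp.single 0 1) < deg (Finsupp.single 2 1 + Finsupp.single 3 1)
          have h1 : deg (Finsupp.single 0 1) = _ := degsum _
          have h2 : deg (Finsupp.single 2 1 + Finsupp.single 3 1) = _ := degsum _
          rw [h1, h2]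
          simp [Finsupp.single_apply]
      · rw [coeff_add, coeff_X', if_pos rfl]
        rw [show ((X 2 : R) * X 3) = monomial (Finsupp.single 2 1 + Finsupp.single 3 1) 1 by
          rw [X, X, monomial_mul, mul_one], coeff_monomial, if_neg, add_zero]
        · exact rfl
        · intro h
          have := DFunLike.congr_fun h 0
          simp [Finsupp.single_apply] at this
    · -- X 1 * X 2, from f = X 1 * X 2
      have hmono : ((X 1 : R) * X 2) = monomial (Finsupp.single 1 1 + Finsupp.single 2 1) 1 := by
        rw [X, X, monomial_mul, mul_one]
      refine Ideal.subset_span ⟨X 1 * X 2, ?_, Finsupp.single 1 1 + Finsupp.single 2 1, ⟨?_, ?_⟩, ?_⟩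
      · refine Ideal.mem_inf.mpr ⟨?_, ?_⟩
        · exact Ideal.mem_span_pair.mpr ⟨0, X 1, by ring⟩
        · exact Ideal.mem_span_pair.mpr ⟨X 2, 0, by ring⟩
      · rw [hmono, coeff_monomial, if_pos rfl]
        exact one_ne_zero
      · intro β hβ
        rw [hmono, coeff_monomial] at hβ
        have : Finsupp.single 1 1 + Finsupp.single 2 1 = β := by
          by_contra hc2
          rw [if_neg hc2] at hβ
          simp at hβ
        subst this
        exact le_refl _
      · rw [hmono, coeff_monomial, if_pos rfl]
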